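/- Let Γ, Γ₀ > 0 and C₀ ≥ 0, and let f, g, ψ : [0,∞) → [0,∞) be measurable functions with ∫₀^∞ f(s)² ds < ∞, ∫₀^∞ g(s)² ds < ∞ and ∫₀^∞ ψ(s) ds < ∞. Let U, S, P, Q : [0,∞) → [0,∞) be continuous functions such that for every t ≥ 0: (Γ²/2)·U(t)² + ½·S(t)² + Γ₀Γ²·∫₀ᵗ P(s)² ds + Γ₀·∫₀ᵗ Q(s)² ds ≤ C₀ + ∫₀ᵗ g(s)Q(s) ds + Γ²·∫₀ᵗ f(s)P(s) ds + Γ²·∫₀ᵗ ψ(s)U(s) ds. Then there exists a constant C' < ∞, independent of t, such that for all t ≥ 0: U(t) + S(t) + ∫₀ᵗ P(s)² ds + ∫₀ᵗ Q(s)² ds ≤ C'. -/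

import Mathlib

open Set MeasureTheory

set_option maxHeartbeats 1600000 in
/-- the analytic core of the long-time estimate (Lemma 5.1). -/
theorem stmt_9 (Γ Γ₀ C₀ : ℝ) (hΓ : 0 < Γ) (hΓ₀ : 0 < Γ₀) (hC₀ : 0 ≤ C₀)
    (f g ψ : ℝ → ℝ)
    (hf0 : ∀ s ∈ Ici (0:ℝ), 0 ≤ f s) (hg0 : ∀ s ∈ Ici (0:ℝ), 0 ≤ g s)
    (hψ0 : ∀ s ∈ Ici (0:ℝ), 0 ≤ ψ s)
    (hfm : Measurable f) (hgm : Measurable g) (hψm : Measurable ψ)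
    (hf2 : IntegrableOn (fun s => f s ^ 2) (Ici 0))
    (hg2 : IntegrableOn (fun s => g s ^ 2) (Ici 0))
    (hψ1 : IntegrableOn ψ (Ici 0))
    (U S P Q : ℝ → ℝ)
    (hUc : ContinuousOn U (Ici 0)) (hSc : ContinuousOn S (Ici 0))
    (hPc : ContinuousOn P (Ici 0)) (hQc : ContinuousOn Q (Ici 0))
    (hU0 : ∀ t ∈ Ici (0:ℝ), 0 ≤ U t) (hS0 : ∀ t ∈ Ici (0:ℝ), 0 ≤ S t)
    (hP0 : ∀ t ∈ Ici (0:ℝ), 0 ≤ P t) (hQ0 : ∀ t ∈ Ici (0:ℝ), 0 ≤ Q t)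
    (hineq : ∀ t ∈ Ici (0:ℝ),
      (Γ ^ 2 / 2) * U t ^ 2 + (1 / 2) * S t ^ 2
          + Γ₀ * Γ ^ 2 * (∫ s in (0:ℝ)..t, P s ^ 2) + Γ₀ * (∫ s in (0:ℝ)..t, Q s ^ 2)
        ≤ C₀ + (∫ s in (0:ℝ)..t, g s * Q s) + Γ ^ 2 * (∫ s in (0:ℝ)..t, f s * P s)
          + Γ ^ 2 * (∫ s in (0:ℝ)..t, ψ s * U s)) :
    ∃ C' : ℝ, ∀ t ∈ Ici (0:ℝ),
      U t + S t + (∫ s in (0:ℝ)..t, P s ^ 2) + (∫ s in (0:ℝ)..t, Q s ^ 2) ≤ C' := by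
  set A := ∫ s in Ici (0:ℝ), f s ^ 2 with hAdef
  set B := ∫ s in Ici (0:ℝ), g s ^ 2 with hBdef
  set Ψ := ∫ s in Ici (0:ℝ), ψ s with hΨdef
  have hA0 : 0 ≤ A := setIntegral_nonneg measurableSet_Ici fun s _ => sq_nonneg _
  have hB0 : 0 ≤ B := setIntegral_nonneg measurableSet_Ici fun s _ => sq_nonneg _
  have hΨnn : 0 ≤ Ψ := setIntegral_nonneg measurableSet_Ici hψ0
  set K := C₀ + 1 / (2 * Γ₀) * B + Γ ^ 2 / (2 * Γ₀) * A with hKdef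
  clear_value A B Ψ K
  have hK0 : 0 ≤ K := by
    have h1 : 0 ≤ 1 / (2 * Γ₀) * B := by positivity
    have h2 : 0 ≤ Γ ^ 2 / (2 * Γ₀) * A := by positivity
    linarith
  have hΓ2 : (0:ℝ) < Γ ^ 2 := by positivity
  -- main intermediate estimate
  have main : ∀ t ∈ Ici (0:ℝ), ∀ M : ℝ, 0 ≤ M → (∀ s ∈ Icc (0:ℝ) t, U s ≤ M) →
      Γ ^ 2 / 2 * U t ^ 2 + 1 / 2 * S t ^ 2
        + Γ₀ * Γ ^ 2 / 2 * (∫ s in (0:ℝ)..t, P s ^ 2)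
        + Γ₀ / 2 * (∫ s in (0:ℝ)..t, Q s ^ 2) ≤ K + Γ ^ 2 * Ψ * M := by
    intro t ht M hM0 hMU
    have ht : (0:ℝ) ≤ t := ht
    have hIcc : Icc (0:ℝ) t ⊆ Ici 0 := Icc_subset_Ici_self
    have hIoc : Ioc (0:ℝ) t ⊆ Ici 0 := Ioc_subset_Icc_self.trans hIcc
    have hIocle : Ioc (0:ℝ) t ≤ᵐ[volume] Ici 0 := HasSubset.Subset.eventuallyLE hIoc
    -- interval integrabilities of continuous functions
    have iP : IntervalIntegrable (fun s => P s ^ 2) volume 0 t := by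
      apply ContinuousOn.intervalIntegrable
      rw [uIcc_of_le ht]; exact (hPc.mono hIcc).pow 2
    have iQ : IntervalIntegrable (fun s => Q s ^ 2) volume 0 t := by
      apply ContinuousOn.intervalIntegrable
      rw [uIcc_of_le ht]; exact (hQc.mono hIcc).pow 2
    have if2 : IntervalIntegrable (fun s => f s ^ 2) volume 0 t := by
      rw [intervalIntegrable_iff, uIoc_of_le ht]; exact hf2.mono_set hIoc
    have ig2 : IntervalIntegrable (fun s => g s ^ 2) volume 0 t := by
      rw [intervalIntegrable_iff, uIoc_of_le ht]; exact hg2.mono_set hIoc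
    have iψ : IntervalIntegrable ψ volume 0 t := by
      rw [intervalIntegrable_iff, uIoc_of_le ht]; exact hψ1.mono_set hIoc
    -- integrability of products
    have prodInt : ∀ (h : ℝ → ℝ) (V : ℝ → ℝ), Measurable h →
        IntegrableOn (fun s => h s ^ 2) (Ici 0) → ContinuousOn V (Ici 0) →
        IntervalIntegrable (fun s => h s * V s) volume 0 t := by
      intro h V hhm hh2 hVc
      rw [intervalIntegrable_iff, uIoc_of_le ht]
      have hVae : AEMeasurable V (volume.restrict (Ioc 0 t)) :=
        (hVc.mono hIoc).aemeasurable measurableSet_Ioc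
      have hV2 : IntegrableOn (fun s => V s ^ 2) (Ioc 0 t) :=
        (((hVc.mono hIcc).pow 2).integrableOn_Icc).mono_set Ioc_subset_Icc_self
      have hdom : IntegrableOn (fun s => (1/2) * h s ^ 2 + (1/2) * V s ^ 2) (Ioc 0 t) :=
        ((hh2.mono_set hIoc).const_mul _).add (hV2.const_mul _)
      refine hdom.mono' ((hhm.aemeasurable.mul hVae).aestronglyMeasurable) ?_
      refine ae_of_all _ fun s => ?_
      rw [Real.norm_eq_abs, abs_mul]
      nlinarith [sq_nonneg (|h s| - |V s|), sq_abs (h s), sq_abs (V s)]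
    have igQ := prodInt g Q hgm hg2 hQc
    have ifP := prodInt f P hfm hf2 hPc
    have iψU : IntervalIntegrable (fun s => ψ s * U s) volume 0 t := by
      apply IntervalIntegrable.mul_continuousOn
      · rw [intervalIntegrable_iff, uIoc_of_le ht]; exact hψ1.mono_set hIoc
      · rw [uIcc_of_le ht]; exact hUc.mono hIcc
    -- bound on tail integrals of data
    have tailBound : ∀ (h : ℝ → ℝ), (∀ s ∈ Ici (0:ℝ), 0 ≤ h s) → IntegrableOn h (Ici 0) →
        (∫ s in (0:ℝ)..t, h s) ≤ ∫ s in Ici (0:ℝ), h s := by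
      intro h h0 hInt
      rw [intervalIntegral.integral_of_le ht]
      exact setIntegral_mono_set hInt (by
        filter_upwards [ae_restrict_mem measurableSet_Ici] with s hs using h0 s hs) hIocle
    -- Young for g·Q
    have hgQ : (∫ s in (0:ℝ)..t, g s * Q s)
        ≤ 1 / (2 * Γ₀) * B + Γ₀ / 2 * (∫ s in (0:ℝ)..t, Q s ^ 2) := by
      have h1 : (∫ s in (0:ℝ)..t, g s * Q s)
          ≤ ∫ s in (0:ℝ)..t, (1 / (2 * Γ₀) * g s ^ 2 + Γ₀ / 2 * Q s ^ 2) := by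
        refine intervalIntegral.integral_mono_on ht igQ ((ig2.const_mul _).add (iQ.const_mul _))
          fun s _ => ?_
        rw [show 1 / (2 * Γ₀) * g s ^ 2 + Γ₀ / 2 * Q s ^ 2
            = (g s ^ 2 + Γ₀ ^ 2 * Q s ^ 2) / (2 * Γ₀) from by field_simp,
          le_div_iff₀ (by positivity)]
        nlinarith [sq_nonneg (g s - Γ₀ * Q s)]
      rw [intervalIntegral.integral_add (ig2.const_mul _) (iQ.const_mul _),
        intervalIntegral.integral_const_mul, intervalIntegral.integral_const_mul] at h1
      have h2 : (∫ s in (0:ℝ)..t, g s ^ 2) ≤ B := by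
        rw [hBdef]; exact tailBound _ (fun s _ => sq_nonneg _) hg2
      have h3 : 0 ≤ 1 / (2 * Γ₀) := by positivity
      nlinarith [mul_le_mul_of_nonneg_left h2 h3]
    -- Young for f·P
    have hfP : (∫ s in (0:ℝ)..t, f s * P s)
        ≤ 1 / (2 * Γ₀) * A + Γ₀ / 2 * (∫ s in (0:ℝ)..t, P s ^ 2) := by
      have h1 : (∫ s in (0:ℝ)..t, f s * P s)
          ≤ ∫ s in (0:ℝ)..t, (1 / (2 * Γ₀) * f s ^ 2 + Γ₀ / 2 * P s ^ 2) := by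
        refine intervalIntegral.integral_mono_on ht ifP ((if2.const_mul _).add (iP.const_mul _))
          fun s _ => ?_
        rw [show 1 / (2 * Γ₀) * f s ^ 2 + Γ₀ / 2 * P s ^ 2
            = (f s ^ 2 + Γ₀ ^ 2 * P s ^ 2) / (2 * Γ₀) from by field_simp,
          le_div_iff₀ (by positivity)]
        nlinarith [sq_nonneg (f s - Γ₀ * P s)]
      rw [intervalIntegral.integral_add (if2.const_mul _) (iP.const_mul _),
        intervalIntegral.integral_const_mul, intervalIntegral.integral_const_mul] at h1
      have h2 : (∫ s in (0:ℝ)..t, f s ^ 2) ≤ A := by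
        rw [hAdef]; exact tailBound _ (fun s _ => sq_nonneg _) hf2
      have h3 : 0 ≤ 1 / (2 * Γ₀) := by positivity
      nlinarith [mul_le_mul_of_nonneg_left h2 h3]
    -- bound for ψ·U
    have hψU : (∫ s in (0:ℝ)..t, ψ s * U s) ≤ M * Ψ := by
      have iψM : IntervalIntegrable (fun s => ψ s * M) volume 0 t := iψ.mul_const M
      have h1 : (∫ s in (0:ℝ)..t, ψ s * U s) ≤ ∫ s in (0:ℝ)..t, ψ s * M := by
        refine intervalIntegral.integral_mono_on ht iψU iψM fun s hs => ?_
        exact mul_le_mul_of_nonneg_left (hMU s hs) (hψ0 s (hIcc hs))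
      have h2 : (∫ s in (0:ℝ)..t, ψ s * M) = (∫ s in (0:ℝ)..t, ψ s) * M := by
        rw [intervalIntegral.integral_mul_const]
      have h3 : (∫ s in (0:ℝ)..t, ψ s) ≤ Ψ := by rw [hΨdef]; exact tailBound _ hψ0 hψ1
      calc (∫ s in (0:ℝ)..t, ψ s * U s) ≤ (∫ s in (0:ℝ)..t, ψ s) * M := by rw [← h2]; exact h1
        _ ≤ Ψ * M := mul_le_mul_of_nonneg_right h3 hM0
        _ = M * Ψ := mul_comm _ _
    -- combine
    have H := hineq t ht
    have hfP2 : Γ ^ 2 * (∫ s in (0:ℝ)..t, f s * P s)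
        ≤ Γ ^ 2 / (2 * Γ₀) * A + Γ₀ * Γ ^ 2 / 2 * (∫ s in (0:ℝ)..t, P s ^ 2) := by
      have h := mul_le_mul_of_nonneg_left hfP (le_of_lt hΓ2)
      ring_nf at h ⊢
      linarith [h]
    have hψU2 : Γ ^ 2 * (∫ s in (0:ℝ)..t, ψ s * U s) ≤ Γ ^ 2 * Ψ * M := by
      calc Γ ^ 2 * (∫ s in (0:ℝ)..t, ψ s * U s) ≤ Γ ^ 2 * (M * Ψ) :=
            mul_le_mul_of_nonneg_left hψU (le_of_lt hΓ2)
        _ = Γ ^ 2 * Ψ * M := by ring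
    rw [hKdef]
    ring_nf at H hgQ hfP2 hψU2 ⊢
    linarith [H, hgQ, hfP2, hψU2]
  -- uniform bound on U
  set D := (4 * K + 4 * Γ ^ 2 * Ψ ^ 2) / Γ ^ 2 with hDdef
  set Mstar := Real.sqrt D with hMdef
  clear_value D Mstar
  have hM0 : 0 ≤ Mstar := hMdef ▸ Real.sqrt_nonneg D
  have hUbound : ∀ t ∈ Ici (0:ℝ), U t ≤ Mstar := by
    intro t ht
    have ht : (0:ℝ) ≤ t := ht
    obtain ⟨x, hxmem, hxmax⟩ := isCompact_Icc.exists_isMaxOn (nonempty_Icc.2 ht)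
      (hUc.mono Icc_subset_Ici_self)
    have hx0 : (0:ℝ) ≤ x := hxmem.1
    have hxICI : x ∈ Ici (0:ℝ) := hx0
    have hUx0 : 0 ≤ U x := hU0 x hxICI
    have hmax' : ∀ s ∈ Icc (0:ℝ) x, U s ≤ U x := fun s hs =>
      hxmax (Icc_subset_Icc_right hxmem.2 hs)
    have hmain := main x hxICI (U x) hUx0 hmax'
    have hIP : 0 ≤ ∫ s in (0:ℝ)..x, P s ^ 2 :=
      intervalIntegral.integral_nonneg hx0 fun u _ => sq_nonneg _
    have hIQ : 0 ≤ ∫ s in (0:ℝ)..x, Q s ^ 2 :=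
      intervalIntegral.integral_nonneg hx0 fun u _ => sq_nonneg _
    have hS2 : 0 ≤ S x ^ 2 := sq_nonneg _
    have hPnn : 0 ≤ Γ₀ * Γ ^ 2 / 2 * ∫ s in (0:ℝ)..x, P s ^ 2 := by positivity
    have hQnn : 0 ≤ Γ₀ / 2 * ∫ s in (0:ℝ)..x, Q s ^ 2 := by positivity
    have hquad : Γ ^ 2 / 2 * U x ^ 2 ≤ K + Γ ^ 2 * Ψ * U x := by linarith
    have hsq : U x ^ 2 ≤ D := by
      rw [hDdef, le_div_iff₀ hΓ2]
      have hy := mul_nonneg (le_of_lt hΓ2) (sq_nonneg (U x - 2 * Ψ))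
      ring_nf at hy hquad ⊢
      linarith [hy, hquad]
    have hUtx : U t ≤ U x := hxmax (right_mem_Icc.2 ht)
    have hxM : U x ≤ Mstar := by rw [hMdef]; exact Real.le_sqrt_of_sq_le hsq
    exact hUtx.trans hxM
  -- final bound
  set L := K + Γ ^ 2 * Ψ * Mstar with hLdef
  clear_value L
  have hL0 : 0 ≤ L := by
    have : 0 ≤ Γ ^ 2 * Ψ * Mstar := by positivity
    linarith
  refine ⟨Mstar + Real.sqrt (2 * L) + 2 * L / (Γ₀ * Γ ^ 2) + 2 * L / Γ₀, fun t ht => ?_⟩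
  have ht0 : (0:ℝ) ≤ t := ht
  have hmain := main t ht Mstar hM0 fun s hs => hUbound s (Icc_subset_Ici_self hs)
  have hIP : 0 ≤ ∫ s in (0:ℝ)..t, P s ^ 2 :=
    intervalIntegral.integral_nonneg ht0 fun u _ => sq_nonneg _
  have hIQ : 0 ≤ ∫ s in (0:ℝ)..t, Q s ^ 2 :=
    intervalIntegral.integral_nonneg ht0 fun u _ => sq_nonneg _
  have hUt : U t ≤ Mstar := hUbound t ht
  have hU2 : 0 ≤ U t ^ 2 := sq_nonneg _
  have e1 := mul_nonneg (le_of_lt hΓ2) hU2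
  have e2 := mul_nonneg (mul_nonneg hΓ₀.le (le_of_lt hΓ2)) hIP
  have e3 := mul_nonneg hΓ₀.le hIQ
  have e4 : 0 ≤ S t ^ 2 := sq_nonneg _
  have hSt : S t ≤ Real.sqrt (2 * L) := by
    refine Real.le_sqrt_of_sq_le ?_
    ring_nf at hmain e1 e2 e3 ⊢
    linarith [hmain, e1, e2, e3]
  have hPt : (∫ s in (0:ℝ)..t, P s ^ 2) ≤ 2 * L / (Γ₀ * Γ ^ 2) := by
    rw [le_div_iff₀ (by positivity)]
    ring_nf at hmain e1 e3 e4 ⊢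
    linarith [hmain, e1, e3, e4]
  have hQt : (∫ s in (0:ℝ)..t, Q s ^ 2) ≤ 2 * L / Γ₀ := by
    rw [le_div_iff₀ hΓ₀]
    ring_nf at hmain e1 e2 e4 ⊢
    linarith [hmain, e1, e2, e4]
  linarith
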